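/- arXiv:1807.08702 — 2 statements merged into one kernel-verified Lean document; each statement's English description precedes it below -/
import Mathlib

section
/- Let w : ℝ → ℝ be nonnegative and integrable, and define I_w(t) = ∫ cos(t·x)·w(x) dx. For real numbers a₁,…,aₙ and b₁,…,bₙ, the weighted L²-distance between the two empirical characteristic functions φ̂(t) = (1/n)∑ⱼ exp(i t aⱼ) and φ̂₀(t) = (1/n)∑ⱼ exp(i t bⱼ) satisfies n² ∫ |φ̂(t) − φ̂₀(t)|² w(t) dt = ∑_{j,s} I_w(aⱼ − a_s) + ∑_{j,s} I_w(bⱼ − b_s) − 2 ∑_{j,s} I_w(aⱼ − b_s). -/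
open MeasureTheory Complex Finset

lemma exp_mul_conj_re (t c c' : ℝ) :
    (Complex.exp (Complex.I * t * c) * (starRingEnd ℂ) (Complex.exp (Complex.I * t * c'))).re
      = Real.cos ((c - c') * t) := by
  rw [← Complex.exp_conj, ← Complex.exp_add]
  have h : Complex.I * t * c + (starRingEnd ℂ) (Complex.I * t * c')
      = ((c - c') * t : ℝ) * Complex.I := by
    simp [map_mul, Complex.conj_I, Complex.conj_ofReal]
    ring
  rw [h, Complex.exp_ofReal_mul_I_re]

lemma cos_mul_int {w : ℝ → ℝ} (hw_int : Integrable w) (c : ℝ) :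
    Integrable (fun t => Real.cos (c * t) * w t) := by
  exact hw_int.bdd_mul
    ((Real.continuous_cos.comp (continuous_const.mul continuous_id)).aestronglyMeasurable)
    (c := 1) (Filter.Eventually.of_forall fun x => by simpa using Real.abs_cos_le_one (c * x))

/-- The quadratic expansion of the weighted L²-distance between two
empirical characteristic functions (Remark 1). -/
theorem ecf_L2_distance_expansion (n : ℕ) (hn : 0 < n)
    (w : ℝ → ℝ) (hw_nonneg : ∀ t, 0 ≤ w t) (hw_int : Integrable w)
    (a b : Fin n → ℝ)
    (Iw : ℝ → ℝ) (hIw : ∀ t, Iw t = ∫ x, Real.cos (t * x) * w x) :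
    (n : ℝ) ^ 2 *
      ∫ t : ℝ, ‖(1 / (n : ℂ)) * ∑ j, Complex.exp (Complex.I * (t : ℂ) * (a j : ℂ))
            - (1 / (n : ℂ)) * ∑ j, Complex.exp (Complex.I * (t : ℂ) * (b j : ℂ))‖ ^ 2 * w t
    = (∑ j, ∑ s, Iw (a j - a s)) + (∑ j, ∑ s, Iw (b j - b s))
        - 2 * ∑ j, ∑ s, Iw (a j - b s) := by
  have hn' : (n : ℝ) ≠ 0 := Nat.cast_ne_zero.mpr hn.ne'
  set G : Fin n → Fin n → ℝ → ℝ := fun j s t =>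
    Real.cos ((a j - a s) * t) + Real.cos ((b j - b s) * t)
      - 2 * Real.cos ((a j - b s) * t) with hG
  have key : ∀ t : ℝ,
      ‖(1 / (n : ℂ)) * ∑ j, Complex.exp (Complex.I * (t : ℂ) * (a j : ℂ))
            - (1 / (n : ℂ)) * ∑ j, Complex.exp (Complex.I * (t : ℂ) * (b j : ℂ))‖ ^ 2
        = ((n : ℝ) ^ 2)⁻¹ * ∑ j, ∑ s, G j s t := by
    intro t
    set u : Fin n → ℂ := fun j =>
      Complex.exp (Complex.I * t * (a j)) - Complex.exp (Complex.I * t * (b j)) with hu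
    have h1 : (1 / (n : ℂ)) * ∑ j, Complex.exp (Complex.I * (t : ℂ) * (a j : ℂ))
            - (1 / (n : ℂ)) * ∑ j, Complex.exp (Complex.I * (t : ℂ) * (b j : ℂ))
        = (1 / (n : ℂ)) * ∑ j, u j := by
      rw [Finset.sum_sub_distrib, mul_sub]
    rw [h1, norm_mul, mul_pow]
    have h2 : ‖(1 / (n : ℂ))‖ ^ 2 = ((n : ℝ) ^ 2)⁻¹ := by
      simp [map_div₀, div_pow]
    have h3 : Complex.normSq (∑ j, u j) = ∑ j, ∑ s, (u j * (starRingEnd ℂ) (u s)).re := by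
      have h := congrArg Complex.re (Complex.mul_conj (∑ j, u j))
      rw [Complex.ofReal_re] at h
      rw [← h, map_sum, Finset.sum_mul_sum, Complex.re_sum]
      exact Finset.sum_congr rfl fun j _ => Complex.re_sum _ _
    have hterm : ∀ j s : Fin n, (u j * (starRingEnd ℂ) (u s)).re
        = Real.cos ((a j - a s) * t) - Real.cos ((a j - b s) * t)
          - Real.cos ((b j - a s) * t) + Real.cos ((b j - b s) * t) := by
      intro j s
      simp only [hu, sub_mul, mul_sub, map_sub, Complex.sub_re, Complex.add_re,
        exp_mul_conj_re]
      ring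
    have hswap : ∑ j, ∑ s, Real.cos ((b j - a s) * t)
        = ∑ j, ∑ s, Real.cos ((a j - b s) * t) := by
      rw [Finset.sum_comm]
      refine Finset.sum_congr rfl fun x _ => Finset.sum_congr rfl fun y _ => ?_
      rw [show (b y - a x) = -(a x - b y) by ring, neg_mul, Real.cos_neg]
    have h4 : ∑ j, ∑ s, (u j * (starRingEnd ℂ) (u s)).re = ∑ j, ∑ s, G j s t := by
      simp only [hterm, hG]
      simp only [Finset.sum_add_distrib, Finset.sum_sub_distrib, ← Finset.mul_sum]
      rw [hswap]
      linarith
    rw [h2, Complex.sq_norm, h3, h4]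
  -- integrability
  have hInt : ∀ j s : Fin n, Integrable (fun t => G j s t * w t) := by
    intro j s
    have e : (fun t => G j s t * w t) = fun t =>
        (Real.cos ((a j - a s) * t) * w t + Real.cos ((b j - b s) * t) * w t)
          - 2 * (Real.cos ((a j - b s) * t) * w t) := by
      funext t; simp only [hG]; ring
    rw [e]
    exact ((cos_mul_int hw_int _).add (cos_mul_int hw_int _)).sub
      ((cos_mul_int hw_int _).const_mul 2)
  have hGint : ∀ j s : Fin n, ∫ t, G j s t * w t
      = Iw (a j - a s) + Iw (b j - b s) - 2 * Iw (a j - b s) := by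
    intro j s
    have e : (fun t => G j s t * w t) = fun t =>
        (Real.cos ((a j - a s) * t) * w t + Real.cos ((b j - b s) * t) * w t)
          - 2 * (Real.cos ((a j - b s) * t) * w t) := by
      funext t; simp only [hG]; ring
    have i1 := cos_mul_int hw_int (a j - a s)
    have i2 := cos_mul_int hw_int (b j - b s)
    have i3 := cos_mul_int hw_int (a j - b s)
    have i12 : Integrable (fun t => Real.cos ((a j - a s) * t) * w t
        + Real.cos ((b j - b s) * t) * w t) := i1.add i2
    have i3' : Integrable (fun t => 2 * (Real.cos ((a j - b s) * t) * w t)) :=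
      i3.const_mul 2
    rw [e, integral_sub i12 i3', integral_add i1 i2, integral_const_mul,
      hIw (a j - a s), hIw (b j - b s), hIw (a j - b s)]
  have hint_eq : (∫ t : ℝ, ‖(1 / (n : ℂ)) * ∑ j, Complex.exp (Complex.I * (t : ℂ) * (a j : ℂ))
            - (1 / (n : ℂ)) * ∑ j, Complex.exp (Complex.I * (t : ℂ) * (b j : ℂ))‖ ^ 2 * w t)
      = ((n : ℝ) ^ 2)⁻¹ * ∑ j, ∑ s, ∫ t, G j s t * w t := by
    have hpt : ∀ t : ℝ, ‖(1 / (n : ℂ)) * ∑ j, Complex.exp (Complex.I * (t : ℂ) * (a j : ℂ))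
            - (1 / (n : ℂ)) * ∑ j, Complex.exp (Complex.I * (t : ℂ) * (b j : ℂ))‖ ^ 2 * w t
        = ((n : ℝ) ^ 2)⁻¹ * ∑ j, ∑ s, (G j s t * w t) := by
      intro t
      rw [key t, mul_assoc]
      congr 1
      rw [Finset.sum_mul]
      exact Finset.sum_congr rfl fun j _ => Finset.sum_mul _ _ _
    simp_rw [hpt]
    rw [integral_const_mul,
      integral_finset_sum _ (fun j _ => integrable_finset_sum _ fun s _ => hInt j s)]
    congr 1
    exact Finset.sum_congr rfl fun j _ => integral_finset_sum _ fun s _ => hInt j s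
  rw [hint_eq, ← mul_assoc, mul_inv_cancel₀ (pow_ne_zero 2 hn'), one_mul]
  simp only [hGint]
  simp only [Finset.sum_add_distrib, Finset.sum_sub_distrib, Finset.mul_sum]
end

section
/- Let X be a random variable with values in a set R, let ε be independent of X with E ε² = 1 and E ε⁴ < ∞, and let σ : R → (0,∞) be bounded measurable with E σ(X)⁴ < ∞. Define ε₀ = σ(X)ε/σ₀(X) for a bounded measurable σ₀ : R → (0,∞) bounded away from 0. If ε and ε₀ have the same distribution, then E[(σ(X)/σ₀(X))²] = 1 and E[(σ(X)/σ₀(X))⁴] · E ε⁴ = E ε⁴; hence if E ε⁴ > 0 and E(ε⁴) > (E ε²)² (i.e. ε² is non-degenerate), then E[(σ(X)/σ₀(X))⁴] = 1, and combined with E[(σ(X)/σ₀(X))²] = 1 and Jensen's inequality (equality case), σ(X)/σ₀(X) = 1 almost surely. -/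
open MeasureTheory ProbabilityTheory

/-- Moment identities from equality in distribution of the error and the null
error, and the resulting degeneracy of the variance ratio (equality case in
Jensen/Cauchy–Schwarz). -/
theorem variance_ratio_degenerate
    {Ωs : Type*} [MeasurableSpace Ωs] (μ : Measure Ωs) [IsProbabilityMeasure μ]
    (R : Set ℝ) (X : Ωs → ℝ) (hX : Measurable X) (hXR : ∀ ω, X ω ∈ R)
    (ε : Ωs → ℝ) (hε : Measurable ε) (hindep : IndepFun ε X μ)
    (hε2 : ∫ ω, (ε ω) ^ 2 ∂μ = 1) (hε4_int : Integrable (fun ω => (ε ω) ^ 4) μ)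
    (σ σ₀ : ℝ → ℝ) (hσ_meas : Measurable σ) (hσ₀_meas : Measurable σ₀)
    (hσ_pos : ∀ x ∈ R, 0 < σ x) (hσ_bdd : ∃ M, ∀ x ∈ R, σ x ≤ M)
    (hσ4_int : Integrable (fun ω => (σ (X ω)) ^ 4) μ)
    (c : ℝ) (hc : 0 < c) (hσ₀_lb : ∀ x ∈ R, c ≤ σ₀ x)
    (hσ₀_bdd : ∃ M, ∀ x ∈ R, σ₀ x ≤ M)
    (ε₀ : Ωs → ℝ) (hε₀ : ∀ ω, ε₀ ω = σ (X ω) * ε ω / σ₀ (X ω))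
    (hdist : Measure.map ε μ = Measure.map ε₀ μ) :
    (∫ ω, (σ (X ω) / σ₀ (X ω)) ^ 2 ∂μ = 1)
    ∧ ((∫ ω, (σ (X ω) / σ₀ (X ω)) ^ 4 ∂μ) * (∫ ω, (ε ω) ^ 4 ∂μ)
        = ∫ ω, (ε ω) ^ 4 ∂μ)
    ∧ (0 < ∫ ω, (ε ω) ^ 4 ∂μ →
        (∫ ω, (ε ω) ^ 2 ∂μ) ^ 2 < ∫ ω, (ε ω) ^ 4 ∂μ →
        (∫ ω, (σ (X ω) / σ₀ (X ω)) ^ 4 ∂μ = 1)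
        ∧ (∀ᵐ ω ∂μ, σ (X ω) / σ₀ (X ω) = 1)) := by
  obtain ⟨M, hM⟩ := hσ_bdd
  have hσ₀_pos : ∀ ω, 0 < σ₀ (X ω) := fun ω => lt_of_lt_of_le hc (hσ₀_lb _ (hXR ω))
  have hf_pos : ∀ ω, 0 < σ (X ω) / σ₀ (X ω) :=
    fun ω => div_pos (hσ_pos _ (hXR ω)) (hσ₀_pos ω)
  have hf_meas : Measurable (fun ω => σ (X ω) / σ₀ (X ω)) :=
    (hσ_meas.comp hX).div (hσ₀_meas.comp hX)
  have hf_bd : ∀ ω, σ (X ω) / σ₀ (X ω) ≤ M / c := fun ω =>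
    div_le_div₀ ((hσ_pos _ (hXR ω)).le.trans (hM _ (hXR ω))) (hM _ (hXR ω)) hc
      (hσ₀_lb _ (hXR ω))
  -- integrability of bounded measurable functions
  have hint_bdd : ∀ (g : Ωs → ℝ), Measurable g → (∀ ω, |g ω| ≤ (M/c)^4 + 1) →
      Integrable g μ := by
    intro g hg hb
    exact (integrable_const ((M/c)^4 + 1)).mono' hg.aestronglyMeasurable
      (Filter.Eventually.of_forall (by simpa using hb))
  have habs : ∀ ω, ∀ k : ℕ, k ≤ 4 → |(σ (X ω) / σ₀ (X ω)) ^ k| ≤ (M/c)^4 + 1 := by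
    intro ω k hk4
    have h1 := hf_pos ω
    have h2 := hf_bd ω
    rw [abs_of_nonneg (pow_nonneg h1.le k)]
    rcases le_or_gt (σ (X ω) / σ₀ (X ω)) 1 with h | h
    · calc (σ (X ω) / σ₀ (X ω)) ^ k ≤ 1 ^ k := pow_le_pow_left₀ h1.le h k
        _ = 1 := one_pow k
        _ ≤ (M/c)^4 + 1 := le_add_of_nonneg_left (by positivity)
    · calc (σ (X ω) / σ₀ (X ω)) ^ k ≤ (σ (X ω) / σ₀ (X ω)) ^ 4 :=
              pow_le_pow_right₀ h.le hk4
        _ ≤ (M/c)^4 := pow_le_pow_left₀ h1.le h2 4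
        _ ≤ (M/c)^4 + 1 := le_add_of_nonneg_right zero_le_one
  have hf2_int : Integrable (fun ω => (σ (X ω) / σ₀ (X ω)) ^ 2) μ :=
    hint_bdd _ (hf_meas.pow_const 2) (fun ω => habs ω 2 (by norm_num))
  have hf4_int : Integrable (fun ω => (σ (X ω) / σ₀ (X ω)) ^ 4) μ :=
    hint_bdd _ (hf_meas.pow_const 4) (fun ω => habs ω 4 (by norm_num))
  have hε2_int : Integrable (fun ω => (ε ω) ^ 2) μ := by
    refine (hε4_int.add (integrable_const 1)).mono'
      ((hε.pow_const 2).aestronglyMeasurable) (Filter.Eventually.of_forall fun ω => ?_)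
    have : (ε ω)^2 ≤ (ε ω)^4 + 1 := by nlinarith [sq_nonneg ((ε ω)^2 - 1), sq_nonneg (ε ω)]
    simp only [Real.norm_eq_abs, abs_of_nonneg (sq_nonneg (ε ω))]
    simpa using this
  have hε₀_meas : Measurable ε₀ := by
    have h : ε₀ = fun ω => σ (X ω) * ε ω / σ₀ (X ω) := funext hε₀
    rw [h]; exact ((hσ_meas.comp hX).mul hε).div (hσ₀_meas.comp hX)
  have hε₀_eq : ∀ ω, ε₀ ω = (σ (X ω) / σ₀ (X ω)) * ε ω := fun ω => by
    rw [hε₀ ω, mul_div_right_comm]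
  -- independence of powers
  have hindep2 : IndepFun (fun ω => (σ (X ω) / σ₀ (X ω)) ^ 2) (fun ω => (ε ω) ^ 2) μ :=
    hindep.symm.comp ((hσ_meas.div hσ₀_meas).pow_const 2) (measurable_id.pow_const 2)
  have hindep4 : IndepFun (fun ω => (σ (X ω) / σ₀ (X ω)) ^ 4) (fun ω => (ε ω) ^ 4) μ :=
    hindep.symm.comp ((hσ_meas.div hσ₀_meas).pow_const 4) (measurable_id.pow_const 4)
  -- moment transfer via hdist
  have key : ∀ k : ℕ, (∫ ω, (ε ω) ^ k ∂μ)
      = ∫ ω, (σ (X ω) / σ₀ (X ω)) ^ k * (ε ω) ^ k ∂μ := by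
    intro k
    have hmk : Measurable (fun x : ℝ => x ^ k) := measurable_id.pow_const k
    calc ∫ ω, (ε ω) ^ k ∂μ = ∫ x, x ^ k ∂(Measure.map ε μ) :=
          (integral_map hε.aemeasurable hmk.aestronglyMeasurable).symm
      _ = ∫ x, x ^ k ∂(Measure.map ε₀ μ) := by rw [hdist]
      _ = ∫ ω, (ε₀ ω) ^ k ∂μ := integral_map hε₀_meas.aemeasurable hmk.aestronglyMeasurable
      _ = ∫ ω, (σ (X ω) / σ₀ (X ω)) ^ k * (ε ω) ^ k ∂μ := by
          congr 1; funext ω; rw [hε₀_eq ω, mul_pow]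
  have hmul2 : ∫ ω, (σ (X ω) / σ₀ (X ω)) ^ 2 * (ε ω) ^ 2 ∂μ
      = (∫ ω, (σ (X ω) / σ₀ (X ω)) ^ 2 ∂μ) * ∫ ω, (ε ω) ^ 2 ∂μ :=
    hindep2.integral_fun_mul_eq_mul_integral hf2_int.aestronglyMeasurable hε2_int.aestronglyMeasurable
  have hmul4 : ∫ ω, (σ (X ω) / σ₀ (X ω)) ^ 4 * (ε ω) ^ 4 ∂μ
      = (∫ ω, (σ (X ω) / σ₀ (X ω)) ^ 4 ∂μ) * ∫ ω, (ε ω) ^ 4 ∂μ :=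
    hindep4.integral_fun_mul_eq_mul_integral hf4_int.aestronglyMeasurable hε4_int.aestronglyMeasurable
  have hI2 : ∫ ω, (σ (X ω) / σ₀ (X ω)) ^ 2 ∂μ = 1 := by
    have h : (1:ℝ) = (∫ ω, (σ (X ω) / σ₀ (X ω)) ^ 2 ∂μ) * 1 := by
      calc (1:ℝ) = ∫ ω, (ε ω) ^ 2 ∂μ := hε2.symm
        _ = ∫ ω, (σ (X ω) / σ₀ (X ω)) ^ 2 * (ε ω) ^ 2 ∂μ := key 2
        _ = (∫ ω, (σ (X ω) / σ₀ (X ω)) ^ 2 ∂μ) * ∫ ω, (ε ω) ^ 2 ∂μ := hmul2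
        _ = (∫ ω, (σ (X ω) / σ₀ (X ω)) ^ 2 ∂μ) * 1 := by rw [hε2]
    linarith
  have eq4 : (∫ ω, (σ (X ω) / σ₀ (X ω)) ^ 4 ∂μ) * (∫ ω, (ε ω) ^ 4 ∂μ)
      = ∫ ω, (ε ω) ^ 4 ∂μ := ((key 4).trans hmul4).symm
  refine ⟨hI2, eq4, fun h4pos _ => ?_⟩
  have hI4 : ∫ ω, (σ (X ω) / σ₀ (X ω)) ^ 4 ∂μ = 1 := by
    have h : (∫ ω, (σ (X ω) / σ₀ (X ω)) ^ 4 ∂μ) * (∫ ω, (ε ω) ^ 4 ∂μ)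
        = 1 * (∫ ω, (ε ω) ^ 4 ∂μ) := by rw [one_mul]; exact eq4
    exact mul_right_cancel₀ (ne_of_gt h4pos) h
  refine ⟨hI4, ?_⟩
  -- E[(f^2 - 1)^2] = 0
  have hzero : ∫ ω, ((σ (X ω) / σ₀ (X ω)) ^ 2 - 1) ^ 2 ∂μ = 0 := by
    have hexp : ∀ ω, ((σ (X ω) / σ₀ (X ω)) ^ 2 - 1) ^ 2
        = (σ (X ω) / σ₀ (X ω)) ^ 4 - 2 * (σ (X ω) / σ₀ (X ω)) ^ 2 + 1 := by
      intro ω; ring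
    have hsub : Integrable (fun ω => (σ (X ω) / σ₀ (X ω)) ^ 4
        - 2 * (σ (X ω) / σ₀ (X ω)) ^ 2) μ := hf4_int.sub (hf2_int.const_mul 2)
    rw [show (fun ω => ((σ (X ω) / σ₀ (X ω)) ^ 2 - 1) ^ 2)
        = fun ω => ((σ (X ω) / σ₀ (X ω)) ^ 4 - 2 * (σ (X ω) / σ₀ (X ω)) ^ 2) + 1
        from funext fun ω => by ring]
    rw [integral_add hsub (integrable_const 1),
      integral_sub hf4_int (hf2_int.const_mul 2), integral_const_mul, hI4, hI2]
    norm_num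
  have hae : ∀ᵐ ω ∂μ, ((σ (X ω) / σ₀ (X ω)) ^ 2 - 1) ^ 2 = 0 := by
    have hint : Integrable (fun ω => ((σ (X ω) / σ₀ (X ω)) ^ 2 - 1) ^ 2) μ := by
      have hsub : Integrable (fun ω => (σ (X ω) / σ₀ (X ω)) ^ 4
          - 2 * (σ (X ω) / σ₀ (X ω)) ^ 2) μ := hf4_int.sub (hf2_int.const_mul 2)
      have h2 : Integrable (fun ω => ((σ (X ω) / σ₀ (X ω)) ^ 4
          - 2 * (σ (X ω) / σ₀ (X ω)) ^ 2) + 1) μ := hsub.add (integrable_const 1)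
      refine h2.congr (Filter.Eventually.of_forall fun ω => ?_)
      ring
    have := (integral_eq_zero_iff_of_nonneg
      (fun ω => sq_nonneg (((σ (X ω) / σ₀ (X ω)) ^ 2 - 1))) hint).mp hzero
    filter_upwards [this] with ω h
    simpa using h
  filter_upwards [hae] with ω h
  have h2 : (σ (X ω) / σ₀ (X ω)) ^ 2 = 1 := by
    have := sq_eq_zero_iff.mp h; linarith
  nlinarith [hf_pos ω]
end
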